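/- There exists d_0 such that for all d ≥ d_0: Σ_{k=3}^{⌊d − 3d/ln(d)⌋} C(d,k) · C(d,k+1) · (2^{-k} C(k, ⌊k/2⌋))^{d−k} ≤ 2^{-d}. -/

import Mathlib

open Finset

/-! Auxiliary combinatorial lemmas -/

lemma middle_step (k : ℕ) (hk : 1 ≤ k) :
    (k+1).choose ((k+1)/2) ≤ 2 * k.choose (k/2) := by
  obtain ⟨i, hi⟩ : ∃ i, (k+1)/2 = i + 1 := ⟨(k+1)/2 - 1, by omega⟩
  rw [hi, Nat.choose_succ_succ]
  have h1 := Nat.choose_le_middle i k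
  have h2 := Nat.choose_le_middle (i+1) k
  simp only [Nat.succ_eq_add_one] at *
  omega

lemma middle_le_38 (k : ℕ) (hk : 3 ≤ k) : 8 * k.choose (k/2) ≤ 3 * 2^k := by
  induction k, hk using Nat.le_induction with
  | base => norm_num
  | succ k hk ih =>
    have h := middle_step k (by omega)
    calc 8 * (k+1).choose ((k+1)/2) ≤ 8 * (2 * k.choose (k/2)) := by omega
      _ = 2 * (8 * k.choose (k/2)) := by ring
      _ ≤ 2 * (3 * 2^k) := by omega
      _ = 3 * 2^(k+1) := by ring

lemma cb_sq (n : ℕ) : (2*n+1) * ((2*n).choose n)^2 ≤ 16^n := by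
  induction n with
  | zero => simp
  | succ n ih =>
    have key : (n+1) * Nat.centralBinom (n+1) = 2*(2*n+1) * Nat.centralBinom n :=
      Nat.succ_mul_centralBinom_succ n
    have hC : Nat.centralBinom n = (2*n).choose n := rfl
    have hD : Nat.centralBinom (n+1) = (2*(n+1)).choose (n+1) := rfl
    rw [hC, hD] at key
    have h1 : (2*(n+1)+1) * ((2*(n+1)).choose (n+1))^2 * (n+1)^2 ≤ 16^(n+1) * (n+1)^2 := by
      have e1 : (2*(n+1)+1) * ((2*(n+1)).choose (n+1))^2 * (n+1)^2
          = (2*n+3) * ((n+1) * (2*(n+1)).choose (n+1))^2 := by ring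
      rw [e1, key]
      have e2 : (2*n+3) * (2*(2*n+1) * (2*n).choose n)^2
          = (4*((2*n+3)*(2*n+1))) * ((2*n+1) * ((2*n).choose n)^2) := by ring
      rw [e2]
      calc (4*((2*n+3)*(2*n+1))) * ((2*n+1) * ((2*n).choose n)^2)
          ≤ (4*(2*n+2)^2) * 16^n := Nat.mul_le_mul (by nlinarith) ih
        _ = 16^(n+1) * (n+1)^2 := by ring
    exact Nat.le_of_mul_le_mul_right h1 (by positivity)

lemma k_mul_sq_choose (k : ℕ) : k * (k.choose (k/2))^2 ≤ 4^k := by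
  obtain ⟨n, rfl | rfl⟩ := Nat.even_or_odd' k
  · have h2 : (2*n)/2 = n := by omega
    rw [h2]
    have h4 : (16:ℕ)^n = 4^(2*n) := by
      rw [show (16:ℕ) = 4^2 by norm_num, ← pow_mul]
    calc 2*n * ((2*n).choose n)^2 ≤ (2*n+1) * ((2*n).choose n)^2 :=
          Nat.mul_le_mul_right _ (by omega)
      _ ≤ 16^n := cb_sq n
      _ = 4^(2*n) := h4
  · have h2 : (2*n+1)/2 = n := by omega
    rw [h2]
    have hle : (2*n+1).choose n ≤ 2 * (2*n).choose n := by
      rcases Nat.eq_zero_or_pos n with rfl | hn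
      · simp
      · have h := middle_step (2*n) (by omega)
        have e1 : (2*n+1)/2 = n := by omega
        have e2 : (2*n)/2 = n := by omega
        rwa [e1, e2] at h
    have h4 : (4:ℕ)^(2*n+1) = 4 * 16^n := by
      rw [pow_succ, show (16:ℕ) = 4^2 by norm_num, ← pow_mul]; ring
    calc (2*n+1) * ((2*n+1).choose n)^2
        ≤ (2*n+1) * (2 * (2*n).choose n)^2 := by
          exact Nat.mul_le_mul_left _ (Nat.pow_le_pow_left hle 2)
      _ = 4 * ((2*n+1) * ((2*n).choose n)^2) := by ring
      _ ≤ 4 * 16^n := by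
          exact Nat.mul_le_mul_left _ (cb_sq n)
      _ = 4^(2*n+1) := h4.symm

/-! Real versions -/

lemma g_le_38 (k : ℕ) (hk : 3 ≤ k) : (k.choose (k/2) : ℝ) / 2^k ≤ 3/8 := by
  have h := middle_le_38 k hk
  rw [div_le_div_iff₀ (by positivity) (by norm_num)]
  have : (8:ℝ) * (k.choose (k/2)) ≤ 3 * 2^k := by exact_mod_cast h
  linarith

lemma g_le_inv_sqrt (k : ℕ) (hk : 1 ≤ k) :
    (k.choose (k/2) : ℝ) / 2^k ≤ 1 / Real.sqrt k := by
  have hkpos : (0:ℝ) < k := by exact_mod_cast hk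
  have h : ((k.choose (k/2) : ℝ))^2 * k ≤ ((2:ℝ)^k)^2 := by
    have := k_mul_sq_choose k
    have hc : ((k:ℝ)) * ((k.choose (k/2) : ℝ))^2 ≤ (4:ℝ)^k := by exact_mod_cast this
    have h4 : ((2:ℝ)^k)^2 = 4^k := by
      rw [← pow_mul, mul_comm, pow_mul]; norm_num
    rw [h4]; linarith
  have hs : Real.sqrt (((k.choose (k/2) : ℝ))^2 * k) ≤ Real.sqrt (((2:ℝ)^k)^2) :=
    Real.sqrt_le_sqrt h
  rw [Real.sqrt_mul (sq_nonneg _), Real.sqrt_sq (by positivity), Real.sqrt_sq (by positivity)]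
    at hs
  rw [div_le_div_iff₀ (by positivity) (Real.sqrt_pos.mpr hkpos)]
  linarith

lemma choose_le_two_pow_nat (n k : ℕ) (h : k ≤ n) : n.choose k ≤ 2^n := by
  rw [← Nat.sum_range_choose n]
  exact Finset.single_le_sum (fun i _ => Nat.zero_le _) (Finset.mem_range.mpr (by omega))

lemma log_factorial_ge (m : ℕ) (hm : 1 ≤ m) :
    (m:ℝ) * Real.log m - m ≤ Real.log (m.factorial) := by
  have hm0 : (0:ℝ) < m := by exact_mod_cast hm
  have h1 : ((m:ℝ))^m / m.factorial ≤ Real.exp m := by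
    calc ((m:ℝ))^m / m.factorial
        ≤ ∑ i ∈ Finset.range (m+1), (m:ℝ)^i / i.factorial := by
          exact Finset.single_le_sum (f := fun i => (m:ℝ)^i / i.factorial)
            (fun i _ => by positivity) (Finset.self_mem_range_succ m)
      _ ≤ Real.exp m := Real.sum_le_exp_of_nonneg (by positivity) _
  have hfac : (0:ℝ) < (m.factorial : ℝ) := by exact_mod_cast m.factorial_pos
  have h2 : ((m:ℝ))^m ≤ Real.exp m * m.factorial := by
    rw [div_le_iff₀ hfac] at h1; linarith
  have h3 := Real.log_le_log (by positivity) h2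
  rw [Real.log_pow, Real.log_mul (Real.exp_ne_zero _) (ne_of_gt hfac), Real.log_exp] at h3
  linarith

lemma log_choose_le (d m : ℕ) (hm : 1 ≤ m) (hmd : m ≤ d) :
    Real.log (d.choose m) ≤ (m:ℝ) * (1 + Real.log d - Real.log m) := by
  have hpos : (0:ℝ) < (d.choose m : ℝ) := by exact_mod_cast Nat.choose_pos hmd
  have h := Nat.choose_le_pow_div (α := ℝ) m d
  have hfac : (0:ℝ) < (m.factorial : ℝ) := by exact_mod_cast m.factorial_pos
  have hd0 : (0:ℝ) < d := by exact_mod_cast lt_of_lt_of_le hm hmd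
  have hlog := Real.log_le_log hpos h
  rw [Real.log_div (pow_pos hd0 m).ne' (ne_of_gt hfac), Real.log_pow] at hlog
  have h2 := log_factorial_ge m hm
  have : Real.log (d.choose m) ≤ (m:ℝ) * Real.log d - ((m:ℝ) * Real.log m - m) := by linarith
  linarith

lemma log3_le : Real.log 3 ≤ 8/5 * Real.log 2 := by
  have h : (3:ℝ)^(5:ℕ) ≤ (2:ℝ)^(8:ℕ) := by norm_num
  have := Real.log_le_log (by positivity) h
  rw [Real.log_pow, Real.log_pow] at this
  push_cast at this
  linarith

lemma log_le_two_sqrt (x : ℝ) (hx : 1 ≤ x) : Real.log x ≤ 2 * Real.sqrt x := by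
  have h1 : Real.log (Real.sqrt x) ≤ Real.sqrt x - 1 :=
    Real.log_le_sub_one_of_pos (Real.sqrt_pos.mpr (by linarith))
  rw [Real.log_sqrt (by linarith)] at h1
  linarith [Real.sqrt_nonneg x]


lemma dfacts (d : ℕ) (hd : 2^1000000 ≤ d) :
    (4000000:ℝ) ≤ d ∧ (600000:ℝ) ≤ Real.log d ∧ Real.log d ≤ d/1000 := by
  have hdR : (2:ℝ)^(1000000:ℕ) ≤ (d:ℝ) := by exact_mod_cast hd
  have hd4 : (4000000:ℝ) ≤ d := by
    calc (4000000:ℝ) ≤ 2^(22:ℕ) := by norm_num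
      _ ≤ 2^(1000000:ℕ) := by gcongr <;> norm_num
      _ ≤ d := hdR
  have hd0 : (0:ℝ) < d := lt_of_lt_of_le (by norm_num) hd4
  have hL : (600000:ℝ) ≤ Real.log d := by
    have h := Real.log_le_log (by positivity) hdR
    rw [Real.log_pow] at h
    have hl2 := Real.log_two_gt_d9
    push_cast at h
    clear hd hdR
    nlinarith
  clear hd hdR
  have hsd : (2000:ℝ) ≤ Real.sqrt d := by
    have h : (2000:ℝ) = Real.sqrt (2000^2) := (Real.sqrt_sq (by norm_num)).symm
    rw [h]; exact Real.sqrt_le_sqrt (by nlinarith)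
  have hsd2 : Real.sqrt d * Real.sqrt d = d := Real.mul_self_sqrt hd0.le
  have hLd : Real.log d ≤ d/1000 := by
    have h := log_le_two_sqrt d (by linarith)
    nlinarith
  exact ⟨hd4, hL, hLd⟩

set_option maxHeartbeats 1600000 in
lemma term_bound (d k : ℕ) (hd4 : (4000000:ℝ) ≤ d)
    (hL : (600000:ℝ) ≤ Real.log d) (hLd : Real.log d ≤ (d:ℝ)/1000) (hk3 : 3 ≤ k)
    (hkr : (k:ℝ) ≤ (d:ℝ) - 3 * d / Real.log d) :
    (d.choose k : ℝ) * (d.choose (k+1)) * ((k.choose (k/2) : ℝ) / 2^k)^(d-k)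
      ≤ 1/2^d/(d:ℝ) := by
  have hd1 : (1:ℝ) ≤ d := by linarith
  have hd0 : (0:ℝ) < d := by linarith
  have hLpos : (0:ℝ) < Real.log d := by linarith
  have hl2a : (0.6931:ℝ) < Real.log 2 := by
    have := Real.log_two_gt_d9; linarith
  have hl2b : Real.log 2 < 0.6932 := by
    have := Real.log_two_lt_d9; linarith
  have hlogL : Real.log (Real.log d) ≤ Real.log d / 350 := by
    have h := log_le_two_sqrt (Real.log d) (by linarith)
    have hsL : (700:ℝ) ≤ Real.sqrt (Real.log d) := by
      have he : (700:ℝ) = Real.sqrt (700^2) := (Real.sqrt_sq (by norm_num)).symm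
      rw [he]; exact Real.sqrt_le_sqrt (by nlinarith)
    have hsL2 : Real.sqrt (Real.log d) * Real.sqrt (Real.log d) = Real.log d :=
      Real.mul_self_sqrt hLpos.le
    nlinarith
  have h3dL : (3000:ℝ) ≤ 3*d/Real.log d := by
    rw [le_div_iff₀ hLpos]; linarith
  have hkltd : k < d := by
    have : (k:ℝ) < d := by linarith
    exact_mod_cast this
  have hkd : k ≤ d := hkltd.le
  have hk1d : k + 1 ≤ d := by
    have h : ((k+1:ℕ):ℝ) ≤ d := by push_cast; linarith
    exact_mod_cast h
  have hmR : ((d - k : ℕ) : ℝ) = (d:ℝ) - (k:ℝ) := by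
    rw [Nat.cast_sub hkd]
  have hw0 : (0:ℝ) ≤ (d:ℝ) - k := by linarith
  have hApos : (0:ℝ) < (d.choose k : ℝ) := by exact_mod_cast Nat.choose_pos hkd
  have hBpos : (0:ℝ) < (d.choose (k+1) : ℝ) := by exact_mod_cast Nat.choose_pos hk1d
  have hcpos : (0:ℝ) < (k.choose (k/2) : ℝ) := by
    exact_mod_cast Nat.choose_pos (Nat.div_le_self k 2)
  have hgpos : (0:ℝ) < (k.choose (k/2) : ℝ) / 2^k := by positivity
  rw [← Real.log_le_log_iff (by positivity) (by positivity)]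
  rw [Real.log_mul (by positivity) (by positivity), Real.log_mul hApos.ne' hBpos.ne',
      Real.log_pow, hmR]
  have hRHS : Real.log ((1:ℝ)/2^d/(d:ℝ)) = -((d:ℝ)*Real.log 2) - Real.log d := by
    rw [div_div, one_div, Real.log_inv, Real.log_mul (by positivity) hd0.ne', Real.log_pow]
    ring
  rw [hRHS]
  have hg1 : Real.log ((k.choose (k/2) : ℝ) / 2^k) ≤ -(7/5*Real.log 2) := by
    have h := Real.log_le_log hgpos (g_le_38 k hk3)
    have h38 : Real.log ((3:ℝ)/8) = Real.log 3 - 3*Real.log 2 := by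
      rw [Real.log_div (by norm_num) (by norm_num),
        show (8:ℝ) = 2^(3:ℕ) by norm_num, Real.log_pow]
      push_cast; ring
    rw [h38] at h
    have h3 := log3_le
    linarith
  have hkpos : (0:ℝ) < k := by
    have : (0:ℕ) < k := by omega
    exact_mod_cast this
  have hg2 : Real.log ((k.choose (k/2) : ℝ) / 2^k) ≤ -(Real.log k / 2) := by
    have h := Real.log_le_log hgpos (g_le_inv_sqrt k (by omega))
    rw [one_div, Real.log_inv, Real.log_sqrt hkpos.le] at h
    linarith
  by_cases hcase : (k:ℝ) ≤ (d:ℝ)/(16*Real.log d)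
  · -- Regime A : small k
    have hAk : Real.log (d.choose k) ≤ (k:ℝ) * Real.log d := by
      have h : (d.choose k : ℝ) ≤ (d:ℝ)^k := by exact_mod_cast Nat.choose_le_pow d k
      have h2 := Real.log_le_log hApos h
      rwa [Real.log_pow] at h2
    have hBk : Real.log (d.choose (k+1)) ≤ ((k:ℝ)+1) * Real.log d := by
      have h : (d.choose (k+1) : ℝ) ≤ (d:ℝ)^(k+1) := by
        exact_mod_cast Nat.choose_le_pow d (k+1)
      have h2 := Real.log_le_log hBpos h
      rw [Real.log_pow] at h2
      push_cast at h2
      linarith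
    have hkL : (k:ℝ) * Real.log d ≤ d/16 := by
      rw [le_div_iff₀ (mul_pos (by norm_num) hLpos)] at hcase
      nlinarith [hcase]
    have hksmall : (k:ℝ) ≤ d/1000000 := by
      have h6 : (k:ℝ)*600000 ≤ (k:ℝ)*Real.log d :=
        mul_le_mul_of_nonneg_left hL (Nat.cast_nonneg k)
      linarith
    have e3 : ((d:ℝ)-k) * Real.log ((k.choose (k/2) : ℝ) / 2^k)
        ≤ ((d:ℝ)-k) * (-(7/5*Real.log 2)) := mul_le_mul_of_nonneg_left hg1 hw0
    have p1 : 0.6931*(d:ℝ) ≤ (d:ℝ)*Real.log 2 := by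
      have := mul_le_mul_of_nonneg_left hl2a.le hd0.le
      linarith
    have p2 : (k:ℝ)*Real.log 2 ≤ 0.6932*k := by
      have := mul_le_mul_of_nonneg_left hl2b.le (Nat.cast_nonneg (α := ℝ) k)
      linarith
    have p3 : (d:ℝ)*Real.log 2 ≤ 0.6932*d := by
      have := mul_le_mul_of_nonneg_left hl2b.le hd0.le
      linarith
    linarith [hAk, hBk, e3, p1, p2, p3, hkL, hLd, hksmall]
  · push_neg at hcase
    by_cases hhalf : 2*k ≤ d
    · -- Regime B : middle k
      have hA2 : Real.log (d.choose k) ≤ (d:ℝ)*Real.log 2 := by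
        have h : (d.choose k : ℝ) ≤ 2^d := by
          exact_mod_cast choose_le_two_pow_nat d k hkd
        have h2 := Real.log_le_log hApos h
        rwa [Real.log_pow] at h2
      have hB2 : Real.log (d.choose (k+1)) ≤ (d:ℝ)*Real.log 2 := by
        have h : (d.choose (k+1) : ℝ) ≤ 2^d := by
          exact_mod_cast choose_le_two_pow_nat d (k+1) hk1d
        have h2 := Real.log_le_log hBpos h
        rwa [Real.log_pow] at h2
      have hlogk : 0.9*Real.log d ≤ Real.log k := by
        have h1 : Real.log ((d:ℝ)/(16*Real.log d)) ≤ Real.log k :=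
          Real.log_le_log (div_pos hd0 (mul_pos (by norm_num) hLpos)) hcase.le
        rw [Real.log_div hd0.ne' (mul_pos (by norm_num) hLpos).ne',
            Real.log_mul (by norm_num) hLpos.ne'] at h1
        have h16 : Real.log 16 = 4*Real.log 2 := by
          rw [show (16:ℝ) = 2^(4:ℕ) by norm_num, Real.log_pow]; push_cast; ring
        linarith
      have hgB : Real.log ((k.choose (k/2) : ℝ) / 2^k) ≤ -(0.45*Real.log d) := by
        linarith
      have hm2 : (d:ℝ)/2 ≤ (d:ℝ) - k := by
        have h : ((2*k:ℕ):ℝ) ≤ d := by exact_mod_cast hhalf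
        push_cast at h
        linarith
      have e3 : ((d:ℝ)-k) * Real.log ((k.choose (k/2) : ℝ) / 2^k)
          ≤ ((d:ℝ)-k) * (-(0.45*Real.log d)) := mul_le_mul_of_nonneg_left hgB hw0
      have e4 : ((d:ℝ)-k) * (-(0.45*Real.log d)) ≤ ((d:ℝ)/2) * (-(0.45*Real.log d)) :=
        mul_le_mul_of_nonpos_right hm2 (by linarith)
      have q1 : (d:ℝ)*600000 ≤ (d:ℝ)*Real.log d :=
        mul_le_mul_of_nonneg_left hL hd0.le
      have q2 : 100*Real.log d ≤ (d:ℝ)*Real.log d :=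
        mul_le_mul_of_nonneg_right (by linarith) hLpos.le
      have p3 : (d:ℝ)*Real.log 2 ≤ 0.6932*d := by
        have := mul_le_mul_of_nonneg_left hl2b.le hd0.le
        linarith
      linarith [hA2, hB2, e3, e4, q1, q2, p3]
    · -- Regime C : large k
      push_neg at hhalf
      have hk_half : (d:ℝ)/2 ≤ (k:ℝ) := by
        have h : ((d:ℕ):ℝ) < ((2*k:ℕ):ℝ) := by exact_mod_cast hhalf
        push_cast at h
        linarith
      have hlogk : Real.log d - Real.log 2 ≤ Real.log k := by
        have h := Real.log_le_log (by positivity : (0:ℝ) < (d:ℝ)/2) hk_half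
        rwa [Real.log_div hd0.ne' (by norm_num)] at h
      have hm1 : 1 ≤ d - k := by omega
      have hmd : d - k ≤ d := by omega
      have hAC : Real.log (d.choose k)
          ≤ ((d-k:ℕ):ℝ) * (1 + Real.log d - Real.log ((d-k:ℕ):ℝ)) := by
        rw [← Nat.choose_symm hkd]
        exact log_choose_le d (d-k) hm1 hmd
      have hBC : Real.log (d.choose (k+1))
          ≤ ((d-k:ℕ):ℝ) * (1 + Real.log d - Real.log ((d-k:ℕ):ℝ)) := by
        have hsym : d.choose (k+1) = d.choose (d-k-1) := by
          rw [← Nat.choose_symm hk1d]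
          congr 1
        have hmono : d.choose (d-k-1) ≤ d.choose (d-k) := by
          have h := Nat.choose_le_succ_of_lt_half_left (r := d-k-1) (n := d) (by omega)
          have e : d-k-1+1 = d-k := by omega
          rwa [e] at h
        have hpos1 : (0:ℝ) < (d.choose (d-k-1) : ℝ) := by
          exact_mod_cast Nat.choose_pos (by omega : d-k-1 ≤ d)
        calc Real.log (d.choose (k+1)) = Real.log (d.choose (d-k-1)) := by rw [hsym]
          _ ≤ Real.log (d.choose (d-k)) :=
              Real.log_le_log hpos1 (by exact_mod_cast hmono)
          _ ≤ _ := log_choose_le d (d-k) hm1 hmd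
      have hw3 : 3*(d:ℝ)/Real.log d ≤ (d:ℝ)-k := by linarith
      have hlogm : Real.log d - Real.log d/350 ≤ Real.log ((d-k:ℕ):ℝ) := by
        have hw3' : 3*(d:ℝ)/Real.log d ≤ ((d-k:ℕ):ℝ) := by rw [hmR]; linarith
        have h := Real.log_le_log (div_pos (by positivity) hLpos) hw3'
        rw [Real.log_div (by positivity) hLpos.ne',
            Real.log_mul (by norm_num) hd0.ne'] at h
        have h3 : (0:ℝ) ≤ Real.log 3 := Real.log_nonneg (by norm_num)
        linarith
      have hX : 1 + Real.log d - Real.log ((d-k:ℕ):ℝ) ≤ 1 + Real.log d/350 := by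
        linarith
      have hmnn : (0:ℝ) ≤ ((d-k:ℕ):ℝ) := Nat.cast_nonneg _
      have eA : Real.log (d.choose k) ≤ ((d:ℝ)-k) * (1 + Real.log d/350) := by
        calc Real.log (d.choose k) ≤ ((d-k:ℕ):ℝ) * (1 + Real.log d - Real.log ((d-k:ℕ):ℝ)) := hAC
          _ ≤ ((d-k:ℕ):ℝ) * (1 + Real.log d/350) := mul_le_mul_of_nonneg_left hX hmnn
          _ = ((d:ℝ)-k) * (1 + Real.log d/350) := by rw [hmR]
      have eB : Real.log (d.choose (k+1)) ≤ ((d:ℝ)-k) * (1 + Real.log d/350) := by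
        calc Real.log (d.choose (k+1)) ≤ ((d-k:ℕ):ℝ) * (1 + Real.log d - Real.log ((d-k:ℕ):ℝ)) := hBC
          _ ≤ ((d-k:ℕ):ℝ) * (1 + Real.log d/350) := mul_le_mul_of_nonneg_left hX hmnn
          _ = ((d:ℝ)-k) * (1 + Real.log d/350) := by rw [hmR]
      have hgC : Real.log ((k.choose (k/2) : ℝ) / 2^k) ≤ -((Real.log d - 0.7)/2) := by
        linarith
      have eg : ((d:ℝ)-k) * Real.log ((k.choose (k/2) : ℝ) / 2^k)
          ≤ ((d:ℝ)-k) * (-((Real.log d - 0.7)/2)) := mul_le_mul_of_nonneg_left hgC hw0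
      have hY : 2.35 + Real.log d/175 - Real.log d/2 ≤ -(0.49*Real.log d) := by
        linarith
      have s2 : ((d:ℝ)-k) * (2.35 + Real.log d/175 - Real.log d/2)
          ≤ (3*(d:ℝ)/Real.log d) * (2.35 + Real.log d/175 - Real.log d/2) :=
        mul_le_mul_of_nonpos_right hw3 (by linarith)
      have s3 : (3*(d:ℝ)/Real.log d) * (2.35 + Real.log d/175 - Real.log d/2)
          ≤ (3*(d:ℝ)/Real.log d) * (-(0.49*Real.log d)) :=
        mul_le_mul_of_nonneg_left hY (le_of_lt (div_pos (by positivity) hLpos))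
      have s4 : (3*(d:ℝ)/Real.log d) * (-(0.49*Real.log d)) = -(1.47*(d:ℝ)) := by
        field_simp
        ring
      have p3 : (d:ℝ)*Real.log 2 ≤ 0.6932*d := by
        have := mul_le_mul_of_nonneg_left hl2b.le hd0.le
        linarith
      linarith [eA, eB, eg, s2, s3, s4, p3, hLd]

set_option maxHeartbeats 1600000 in
/-- For all sufficiently large `d`,
`∑_{k=3}^{⌊d - 3d/ln d⌋} C(d,k) C(d,k+1) (2^{-k} C(k,⌊k/2⌋))^{d-k} ≤ 2^{-d}`. -/
theorem stmt7 : ∃ d0 : ℕ, ∀ d : ℕ, d0 ≤ d →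
    ∑ k ∈ Finset.Icc 3 (Nat.floor ((d : ℝ) - 3 * d / Real.log d)),
        (d.choose k : ℝ) * (d.choose (k + 1)) *
          ((2 : ℝ) ^ (-(k : ℤ)) * (k.choose (k / 2))) ^ (d - k)
      ≤ 1 / 2 ^ d := by
  refine ⟨2^1000000, fun d hd => ?_⟩
  obtain ⟨hd4, hL, hLd⟩ := dfacts d hd
  clear hd
  have hd0 : (0:ℝ) < d := by linarith
  have hLpos : (0:ℝ) < Real.log d := by linarith
  have hnn : 0 ≤ (d:ℝ) - 3*d/Real.log d := by
    have h : 3*(d:ℝ)/Real.log d ≤ d := by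
      rw [div_le_iff₀ hLpos]; nlinarith
    linarith
  set K := Nat.floor ((d : ℝ) - 3 * d / Real.log d) with hK
  have hterm : ∀ k ∈ Finset.Icc 3 K,
      (d.choose k : ℝ) * (d.choose (k + 1)) *
          ((2 : ℝ) ^ (-(k : ℤ)) * (k.choose (k / 2))) ^ (d - k) ≤ 1/2^d/(d:ℝ) := by
    intro k hk
    rw [Finset.mem_Icc] at hk
    have hkr : (k:ℝ) ≤ (d:ℝ) - 3*d/Real.log d := by
      calc (k:ℝ) ≤ (K:ℝ) := by exact_mod_cast hk.2
        _ ≤ _ := Nat.floor_le hnn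
    have h2 : ((2:ℝ)^(-(k:ℤ)) * ((k.choose (k/2):ℝ))) = (k.choose (k/2):ℝ)/2^k := by
      rw [zpow_neg, zpow_natCast]; ring
    rw [h2]
    exact term_bound d k hd4 hL hLd hk.1 hkr
  have hKd : K ≤ d := by
    have h : ((d:ℝ) - 3*d/Real.log d) ≤ ((d:ℕ):ℝ) := by
      have : (0:ℝ) ≤ 3*(d:ℝ)/Real.log d := le_of_lt (div_pos (by positivity) hLpos)
      linarith
    calc K ≤ Nat.floor ((d:ℕ):ℝ) := Nat.floor_le_floor h
      _ = d := Nat.floor_natCast d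
  calc ∑ k ∈ Finset.Icc 3 K,
        (d.choose k : ℝ) * (d.choose (k + 1)) *
          ((2 : ℝ) ^ (-(k : ℤ)) * (k.choose (k / 2))) ^ (d - k)
      ≤ (Finset.Icc 3 K).card • (1/2^d/(d:ℝ)) :=
        Finset.sum_le_card_nsmul _ _ _ hterm
    _ = ((Finset.Icc 3 K).card : ℝ) * (1/2^d/(d:ℝ)) := nsmul_eq_mul _ _
    _ ≤ (d:ℝ) * (1/2^d/(d:ℝ)) := by
        have hcard : (Finset.Icc 3 K).card ≤ d := by
          rw [Nat.card_Icc]; omega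
        exact mul_le_mul_of_nonneg_right (by exact_mod_cast hcard) (by positivity)
    _ = 1/2^d := by
        field_simp
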